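/- Let f : [0,1]² → [0,1]² and π : [0,1]² → ℝ^5 be C^3, and let P = π(p) be a point such that π^{-1}(P) = {p} and the five vectors π_x(p), π_y(p), π_{xx}(p), π_{xy}(p), π_{yy}(p) are linearly independent in ℝ^5. Let p_0, p_1, … ∈ [0,1]² be a trajectory of f and P_i = π(p_i). If the set {P_0, P_1, …} ⊆ ℝ^5 has d distinct fractal approach directions at P, then the set {p_0, p_1, …} ⊆ ℝ² has d distinct fractal approach directions at p. -/

import Mathlib

open Set Filter Topology

/-- The unit square `[0,1]²` in the Euclidean plane. -/
def unitSq : Set (EuclideanSpace ℝ (Fin 2)) := {x | ∀ i, x i ∈ Set.Icc (0:ℝ) 1}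

/-- The standard basis direction `eₓ = (1,0)` of the plane. -/
noncomputable def ex : EuclideanSpace ℝ (Fin 2) := EuclideanSpace.single 0 1

/-- The standard basis direction `e_y = (0,1)` of the plane. -/
noncomputable def ey : EuclideanSpace ℝ (Fin 2) := EuclideanSpace.single 1 1

/-- A set `S` has the fractal approach direction `l` (a unit vector) at the base point `P`:
there is a sequence of points of `S`, different from `P`, converging to `P`, whose
normalized differences from `P` converge to `l`, and whose distances to `P` shrink
geometrically: `C⁻ ≤ ‖Q_{k+1} − P‖/‖Q_k − P‖ ≤ C⁺` with `0 < C⁻ ≤ C⁺ < 1`. -/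
def HasFractalApproachDirection {E : Type*} [NormedAddCommGroup E] [NormedSpace ℝ E]
    (S : Set E) (P l : E) : Prop :=
  ‖l‖ = 1 ∧ ∃ Q : ℕ → E, (∀ k, Q k ∈ S) ∧ (∀ k, Q k ≠ P) ∧
    Filter.Tendsto Q Filter.atTop (nhds P) ∧
    Filter.Tendsto (fun k => ‖Q k - P‖⁻¹ • (Q k - P)) Filter.atTop (nhds l) ∧
    ∃ Cminus Cplus : ℝ, 0 < Cminus ∧ Cminus ≤ Cplus ∧ Cplus < 1 ∧
      ∀ k, Cminus ≤ ‖Q (k + 1) - P‖ / ‖Q k - P‖ ∧ ‖Q (k + 1) - P‖ / ‖Q k - P‖ ≤ Cplus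

/-- `S` has `d` distinct fractal approach directions at `P`. -/
def HasDistinctFractalApproachDirections {E : Type*} [NormedAddCommGroup E]
    [NormedSpace ℝ E] (S : Set E) (P : E) (d : ℕ) : Prop :=
  ∃ l : Fin d → E, (∀ i, HasFractalApproachDirection S P (l i)) ∧
    ∀ i j, i ≠ j → l i ≠ l j ∧ l i ≠ -l j

lemma unitSq_eq : unitSq = (EuclideanSpace.equiv (Fin 2) ℝ) ⁻¹' Set.pi Set.univ (fun _ : Fin 2 => Set.Icc (0:ℝ) 1) := by
  ext x; exact (Set.mem_univ_pi).symm

lemma unitSq_compact : IsCompact unitSq := by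
  rw [unitSq_eq]
  exact (EuclideanSpace.equiv (Fin 2) ℝ).toHomeomorph.isCompact_preimage.mpr (isCompact_univ_pi (fun i => isCompact_Icc))

lemma unitSq_uniqueDiff : UniqueDiffOn ℝ unitSq := by
  apply uniqueDiffOn_convex
  · rw [unitSq_eq]; exact (convex_pi (fun i _ => convex_Icc 0 1)).linear_preimage (EuclideanSpace.equiv (Fin 2) ℝ).toLinearMap
  · refine ⟨WithLp.toLp 2 (fun _ => 1/2), ?_⟩
    rw [unitSq_eq]
    apply preimage_interior_subset_interior_preimage (EuclideanSpace.equiv (Fin 2) ℝ).continuous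
    rw [interior_pi_set Set.finite_univ, Set.mem_preimage, Set.mem_univ_pi]
    intro i
    rw [interior_Icc]
    show (1/2:ℝ) ∈ Set.Ioo 0 1
    constructor <;> norm_num

lemma euclid2_decomp (v : EuclideanSpace ℝ (Fin 2)) : v = v 0 • ex + v 1 • ey := by
  ext i
  fin_cases i <;> simp [ex, ey, EuclideanSpace.single_apply]

lemma tendsto_normalize {E : Type*} [NormedAddCommGroup E] [NormedSpace ℝ E]
    {x₀ : E} (h : x₀ ≠ 0) :
    Tendsto (fun x : E => ‖x‖⁻¹ • x) (nhds x₀) (nhds (‖x₀‖⁻¹ • x₀)) := by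
  exact Tendsto.smul ((continuous_norm.tendsto x₀).inv₀ (norm_ne_zero_iff.mpr h)) tendsto_id

lemma exists_bound (A : EuclideanSpace ℝ (Fin 2) →L[ℝ] EuclideanSpace ℝ (Fin 5))
    (hA : ∀ v, A v = 0 → v = 0) : ∃ c : ℝ, 0 < c ∧ ∀ v, c * ‖v‖ ≤ ‖A v‖ := by
  have hS : IsCompact (Metric.sphere (0 : EuclideanSpace ℝ (Fin 2)) 1) := isCompact_sphere 0 1
  have hne : (Metric.sphere (0 : EuclideanSpace ℝ (Fin 2)) 1).Nonempty := by
    refine ⟨ex, ?_⟩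
    simp [ex, mem_sphere_iff_norm, EuclideanSpace.norm_single]
  obtain ⟨v₀, hv₀S, hv₀min⟩ := hS.exists_isMinOn hne
    (Continuous.continuousOn (by continuity : Continuous (fun v => ‖A v‖)))
  have hv₀norm : ‖v₀‖ = 1 := by simpa [mem_sphere_iff_norm] using hv₀S
  have hv₀ne : v₀ ≠ 0 := by intro h; rw [h] at hv₀norm; simp at hv₀norm
  have hc : 0 < ‖A v₀‖ := by
    rw [norm_pos_iff]
    intro h
    exact hv₀ne (hA v₀ h)
  refine ⟨‖A v₀‖, hc, fun v => ?_⟩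
  rcases eq_or_ne v 0 with rfl | hv
  · simp
  · have hvn : (0:ℝ) < ‖v‖ := norm_pos_iff.mpr hv
    have hu : ‖v‖⁻¹ • v ∈ Metric.sphere (0 : EuclideanSpace ℝ (Fin 2)) 1 := by
      simp [mem_sphere_iff_norm, norm_smul, abs_of_pos (inv_pos.mpr hvn), inv_mul_cancel₀ hvn.ne']
    have h2 : ‖A v₀‖ ≤ ‖A (‖v‖⁻¹ • v)‖ := hv₀min hu
    rw [map_smul, norm_smul, norm_inv, norm_norm] at h2
    calc ‖A v₀‖ * ‖v‖ ≤ (‖v‖⁻¹ * ‖A v‖) * ‖v‖ := by nlinarith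
    _ = ‖A v‖ := by field_simp

lemma seq_to_p (ψ : EuclideanSpace ℝ (Fin 2) → EuclideanSpace ℝ (Fin 5))
    (hψc : ContinuousOn ψ unitSq)
    (p : EuclideanSpace ℝ (Fin 2)) (hp : p ∈ unitSq)
    (hinj : ∀ x ∈ unitSq, ψ x = ψ p → x = p)
    (x : ℕ → EuclideanSpace ℝ (Fin 2)) (hx : ∀ k, x k ∈ unitSq)
    (h : Tendsto (fun k => ψ (x k)) atTop (nhds (ψ p))) :
    Tendsto x atTop (nhds p) := by
  apply tendsto_of_subseq_tendsto
  intro ns hns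
  obtain ⟨a, haU, ms, hms, htend⟩ := unitSq_compact.tendsto_subseq (fun k => hx (ns k))
  refine ⟨ms, ?_⟩
  have h1 : Tendsto (fun n => x (ns (ms n))) atTop (nhds a) := htend
  have h2 : Tendsto (fun n => ψ (x (ns (ms n)))) atTop (nhds (ψ a)) := by
    apply (hψc a haU).tendsto.comp
    apply tendsto_nhdsWithin_of_tendsto_nhds_of_eventually_within _ h1
    exact Eventually.of_forall (fun n => hx _)
  have h3 : Tendsto (fun n => ψ (x (ns (ms n)))) atTop (nhds (ψ p)) :=
    h.comp (hns.comp hms.tendsto_atTop)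
  have : ψ a = ψ p := tendsto_nhds_unique h2 h3
  rwa [hinj a haU this] at h1

lemma pull_one
    (ψ : EuclideanSpace ℝ (Fin 2) → EuclideanSpace ℝ (Fin 5))
    (p : EuclideanSpace ℝ (Fin 2)) (hp : p ∈ unitSq)
    (hψc : ContinuousOn ψ unitSq)
    (hinj : ∀ x ∈ unitSq, ψ x = ψ p → x = p)
    (A : EuclideanSpace ℝ (Fin 2) →L[ℝ] EuclideanSpace ℝ (Fin 5))
    (hder : HasFDerivWithinAt ψ A unitSq p)
    (c : ℝ) (hc : 0 < c) (hcA : ∀ v, c * ‖v‖ ≤ ‖A v‖)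
    (T : ℕ → EuclideanSpace ℝ (Fin 2)) (hT : ∀ i, T i ∈ unitSq)
    (L : EuclideanSpace ℝ (Fin 5))
    (hL : HasFractalApproachDirection (Set.range fun i => ψ (T i)) (ψ p) L) :
    ∃ l, L = ‖A l‖⁻¹ • A l ∧ HasFractalApproachDirection (Set.range T) p l := by
  obtain ⟨hLn, Q, hQmem, hQne, hQt, hQdir, Cm, Cp, hCm, hCmp, hCp, hQr⟩ := hL
  have hQmem' : ∀ k, ∃ i, ψ (T i) = Q k := fun k => hQmem k
  choose idx hidx using hQmem'
  set q : ℕ → EuclideanSpace ℝ (Fin 2) := fun k => T (idx k) with hq_def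
  have hqU : ∀ k, q k ∈ unitSq := fun k => hT _
  have hqQ : ∀ k, ψ (q k) = Q k := fun k => hidx k
  have hqne : ∀ k, q k ≠ p := by
    intro k h
    exact hQne k (by rw [← hqQ k, h])
  have htpos : ∀ k, (0:ℝ) < ‖q k - p‖ :=
    fun k => norm_pos_iff.mpr (sub_ne_zero.mpr (hqne k))
  have hqt : Tendsto q atTop (nhds p) := by
    apply seq_to_p ψ hψc p hp hinj q hqU
    have : (fun k => ψ (q k)) = Q := funext hqQ
    rw [this]; exact hQt
  -- the normalized increments and rescaled image increments
  set u : ℕ → EuclideanSpace ℝ (Fin 2) := fun k => ‖q k - p‖⁻¹ • (q k - p) with hu_def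
  set w : ℕ → EuclideanSpace ℝ (Fin 5) := fun k => ‖q k - p‖⁻¹ • (Q k - ψ p) with hw_def
  have hun : ∀ k, ‖u k‖ = 1 := by
    intro k
    rw [hu_def]
    simp only [norm_smul, norm_inv, norm_norm]
    exact inv_mul_cancel₀ (htpos k).ne'
  have huS : ∀ k, u k ∈ Metric.sphere (0 : EuclideanSpace ℝ (Fin 2)) 1 := by
    intro k; simpa [mem_sphere_iff_norm] using hun k
  have hQw : ∀ k, Q k - ψ p = ‖q k - p‖ • w k := by
    intro k; rw [hw_def]; exact (smul_inv_smul₀ (htpos k).ne' _).symm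
  have hwnorm : ∀ k, ‖Q k - ψ p‖ = ‖q k - p‖ * ‖w k‖ := by
    intro k
    rw [hQw k, norm_smul, Real.norm_eq_abs, abs_of_pos (htpos k)]
  have hwpos : ∀ k, (0:ℝ) < ‖w k‖ := by
    intro k
    rw [norm_pos_iff, hw_def]
    exact smul_ne_zero (inv_ne_zero (htpos k).ne') (sub_ne_zero.mpr (hQne k))
  -- the little-o estimate
  have hdiffz : Tendsto (fun k => w k - A (u k)) atTop (nhds 0) := by
    have ho := hder.isLittleO
    have hqtW : Tendsto q atTop (nhdsWithin p unitSq) :=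
      tendsto_nhdsWithin_of_tendsto_nhds_of_eventually_within _ hqt
        (Eventually.of_forall hqU)
    have ho2 := ho.comp_tendsto hqtW
    have ho3 := ho2.norm_norm.tendsto_div_nhds_zero
    rw [tendsto_zero_iff_norm_tendsto_zero]
    have heq : ∀ k, ‖w k - A (u k)‖ =
        ‖ψ (q k) - ψ p - A (q k - p)‖ / ‖q k - p‖ := by
      intro k
      have : w k - A (u k) = ‖q k - p‖⁻¹ • (ψ (q k) - ψ p - A (q k - p)) := by
        simp only [hw_def, hu_def, map_smul, map_sub, smul_sub, hqQ]
      rw [this, norm_smul, norm_inv, norm_norm, div_eq_inv_mul]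
    have : (fun k => ‖w k - A (u k)‖) =
        fun k => ‖(fun x => ψ x - ψ p - A (x - p)) (q k)‖ / ‖(fun x => x - p) (q k)‖ := by
      funext k; rw [heq k]
    rw [this]
    exact ho3
  -- key: any sphere limit point m of a subsequence of u satisfies L = A m / ‖A m‖
  have hAne : ∀ m : EuclideanSpace ℝ (Fin 2), ‖m‖ = 1 → A m ≠ 0 := by
    intro m hm h
    have := hcA m
    rw [h, hm, norm_zero, mul_one] at this
    linarith
  have hgQ : ∀ k, ‖Q k - ψ p‖⁻¹ • (Q k - ψ p) = ‖w k‖⁻¹ • w k := by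
    intro k
    rw [hQw k, norm_smul, Real.norm_eq_abs, abs_of_pos (htpos k), mul_inv, smul_smul,
      mul_comm (‖q k - p‖)⁻¹, mul_assoc, inv_mul_cancel₀ (htpos k).ne', mul_one]
  have dirlim : ∀ φ : ℕ → ℕ, Tendsto φ atTop atTop →
      ∀ m : EuclideanSpace ℝ (Fin 2), ‖m‖ = 1 →
      Tendsto (fun n => u (φ n)) atTop (nhds m) → L = ‖A m‖⁻¹ • A m := by
    intro φ hφ m hm hum
    have hAm := hAne m hm
    have hw1 : Tendsto (fun n => w (φ n)) atTop (nhds (A m)) := by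
      have h1 : Tendsto (fun n => A (u (φ n))) atTop (nhds (A m)) :=
        (A.continuous.tendsto m).comp hum
      have h2 : Tendsto (fun n => w (φ n) - A (u (φ n))) atTop (nhds 0) :=
        hdiffz.comp hφ
      have h3 := h2.add h1
      simpa using h3
    have hgw : Tendsto (fun n => ‖w (φ n)‖⁻¹ • w (φ n)) atTop (nhds (‖A m‖⁻¹ • A m)) :=
      (tendsto_normalize hAm).comp hw1
    have hdir2 : Tendsto (fun n => ‖w (φ n)‖⁻¹ • w (φ n)) atTop (nhds L) := by
      have := hQdir.comp hφ
      have heq : (fun n => ‖Q (φ n) - ψ p‖⁻¹ • (Q (φ n) - ψ p)) =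
          fun n => ‖w (φ n)‖⁻¹ • w (φ n) := funext fun n => hgQ (φ n)
      rw [← heq]
      exact this
    exact tendsto_nhds_unique hdir2 hgw
  -- extract the direction l
  obtain ⟨l, hlS, φ, hφ, hul⟩ := (isCompact_sphere (0 : EuclideanSpace ℝ (Fin 2)) 1).tendsto_subseq huS
  have hln : ‖l‖ = 1 := by simpa [mem_sphere_iff_norm] using hlS
  have hLl : L = ‖A l‖⁻¹ • A l := dirlim φ hφ.tendsto_atTop l hln hul
  -- uniqueness of the preimage direction
  have huniq : ∀ m : EuclideanSpace ℝ (Fin 2), ‖m‖ = 1 →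
      ‖A m‖⁻¹ • A m = ‖A l‖⁻¹ • A l → m = l := by
    intro m hm heq
    have hAm := hAne m hm
    have hAl := hAne l hln
    have hAmpos : (0:ℝ) < ‖A m‖ := norm_pos_iff.mpr hAm
    have hAlpos : (0:ℝ) < ‖A l‖ := norm_pos_iff.mpr hAl
    set r : ℝ := ‖A m‖ * ‖A l‖⁻¹ with hr_def
    have hrpos : 0 < r := mul_pos hAmpos (inv_pos.mpr hAlpos)
    have hAmr : A m = r • A l := by
      have := congrArg (fun x => ‖A m‖ • x) heq
      rw [smul_inv_smul₀ hAmpos.ne'] at this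
      rw [this, smul_smul, hr_def]
    have hker : A (m - r • l) = 0 := by
      rw [map_sub, map_smul, hAmr, sub_self]
    have hz : m - r • l = 0 := by
      have h0 := hcA (m - r • l)
      rw [hker, norm_zero] at h0
      have : ‖m - r • l‖ ≤ 0 := by nlinarith
      have := le_antisymm this (norm_nonneg _)
      exact norm_eq_zero.mp this
    have hml : m = r • l := by
      have := sub_eq_zero.mp hz
      exact this
    have hr1 : r = 1 := by
      have : ‖m‖ = |r| * ‖l‖ := by rw [hml, norm_smul, Real.norm_eq_abs]
      rw [hm, hln, mul_one, abs_of_pos hrpos] at this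
      linarith
    rw [hml, hr1, one_smul]
  -- full convergence of u to l
  have hulfull : Tendsto u atTop (nhds l) := by
    apply tendsto_of_subseq_tendsto
    intro ns hns
    obtain ⟨m, hmS, ms, hms, hum⟩ :=
      (isCompact_sphere (0 : EuclideanSpace ℝ (Fin 2)) 1).tendsto_subseq (fun k => huS (ns k))
    refine ⟨ms, ?_⟩
    have hm1 : ‖m‖ = 1 := by simpa [mem_sphere_iff_norm] using hmS
    have hLm : L = ‖A m‖⁻¹ • A m :=
      dirlim (fun n => ns (ms n)) (hns.comp hms.tendsto_atTop) m hm1 hum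
    have hml : m = l := huniq m hm1 (by rw [← hLm, hLl])
    rw [← hml]
    exact hum
  -- convergence of the norms of w
  have hwfull : Tendsto w atTop (nhds (A l)) := by
    have h1 : Tendsto (fun k => A (u k)) atTop (nhds (A l)) :=
      (A.continuous.tendsto l).comp hulfull
    have h3 := hdiffz.add h1
    simpa using h3
  have hsl : Tendsto (fun k => ‖w k‖) atTop (nhds ‖A l‖) := hwfull.norm
  have hAlpos : (0:ℝ) < ‖A l‖ := norm_pos_iff.mpr (hAne l hln)
  have hratio1 : Tendsto (fun k => ‖w k‖ / ‖w (k+1)‖) atTop (nhds 1) := by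
    have h2 : Tendsto (fun k => ‖w (k+1)‖) atTop (nhds ‖A l‖) :=
      hsl.comp (tendsto_add_atTop_nat 1)
    have := hsl.div h2 hAlpos.ne'
    rwa [div_self hAlpos.ne'] at this
  have hCp0 : (0:ℝ) < Cp := lt_of_lt_of_le hCm hCmp
  have hIoo : (1:ℝ) ∈ Set.Ioo (1/2 : ℝ) ((1+Cp)/(2*Cp)) := by
    constructor
    · norm_num
    · rw [lt_div_iff₀ (by linarith)]
      linarith
  obtain ⟨N, hN⟩ := Filter.eventually_atTop.mp
    (hratio1.eventually (Ioo_mem_nhds hIoo.1 hIoo.2))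
  -- ratio transfer identity
  have hident : ∀ k, ‖q (k+1) - p‖ / ‖q k - p‖ =
      (‖Q (k+1) - ψ p‖ / ‖Q k - ψ p‖) * (‖w k‖ / ‖w (k+1)‖) := by
    intro k
    have h1 := (htpos k).ne'
    have h2 := (htpos (k+1)).ne'
    have h3 := (hwpos k).ne'
    have h4 := (hwpos (k+1)).ne'
    rw [hwnorm k, hwnorm (k+1)]
    field_simp
  refine ⟨l, hLl, hln, fun k => q (k + N), fun k => ⟨idx (k+N), rfl⟩,
    fun k => hqne (k+N), hqt.comp (tendsto_add_atTop_nat N), ?_, ?_⟩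
  · exact hulfull.comp (tendsto_add_atTop_nat N)
  · refine ⟨Cm/2, (1+Cp)/2, by linarith, by linarith, by linarith, ?_⟩
    intro k
    have hkN : k + N ≥ N := le_add_self
    have hw1 := hN (k+N) hkN
    have hQrk := hQr (k+N)
    have e1 : (fun k => q (k + N)) (k+1) = q (k + N + 1) := by
      have h : k + 1 + N = k + N + 1 := by omega
      show q (k+1+N) = q (k+N+1)
      rw [h]
    have e2 : (fun k => q (k + N)) k = q (k + N) := rfl
    rw [e1, e2, hident (k+N)]
    obtain ⟨hrl, hru⟩ := hQrk
    obtain ⟨hfl, hfu⟩ := hw1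
    have hρ0 : (0:ℝ) ≤ ‖Q (k+N+1) - ψ p‖ / ‖Q (k+N) - ψ p‖ := by positivity
    have hfac0 : (0:ℝ) ≤ ‖w (k+N)‖ / ‖w (k+N+1)‖ := by positivity
    constructor
    · have step1 : Cm * (1/2) ≤ (‖Q (k+N+1) - ψ p‖ / ‖Q (k+N) - ψ p‖) * (‖w (k+N)‖ / ‖w (k+N+1)‖) :=
        mul_le_mul hrl hfl.le (by norm_num) hρ0
      linarith
    · have step1 : (‖Q (k+N+1) - ψ p‖ / ‖Q (k+N) - ψ p‖) * (‖w (k+N)‖ / ‖w (k+N+1)‖) ≤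
          Cp * (‖w (k+N)‖ / ‖w (k+N+1)‖) := mul_le_mul_of_nonneg_right hru hfac0
      have step2 : Cp * (‖w (k+N)‖ / ‖w (k+N+1)‖) ≤ Cp * ((1+Cp)/(2*Cp)) :=
        mul_le_mul_of_nonneg_left hfu.le hCp0.le
      have step3 : Cp * ((1+Cp)/(2*Cp)) = (1+Cp)/2 := by field_simp
      linarith

/-- **Lemma JJ14.** If the reconstructed trajectory `P_i = ψ(p_i)` has `d` distinct fractal
approach directions at `P = ψ(p)`, then the underlying trajectory `p_i` has `d` distinct
fractal approach directions at `p`. -/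
theorem statement13
    (f : EuclideanSpace ℝ (Fin 2) → EuclideanSpace ℝ (Fin 2))
    (ψ : EuclideanSpace ℝ (Fin 2) → EuclideanSpace ℝ (Fin 5))
    (hfmaps : MapsTo f unitSq unitSq)
    (hf : ContDiffOn ℝ 3 f unitSq)
    (hψ : ContDiffOn ℝ 3 ψ unitSq)
    (p : EuclideanSpace ℝ (Fin 2)) (hp : p ∈ unitSq)
    (P : EuclideanSpace ℝ (Fin 5)) (hP : P = ψ p)
    (hinj : ∀ x ∈ unitSq, ψ x = P → x = p)
    (hindep : LinearIndependent ℝ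
      ![iteratedFDerivWithin ℝ 1 ψ unitSq p ![ex],
        iteratedFDerivWithin ℝ 1 ψ unitSq p ![ey],
        iteratedFDerivWithin ℝ 2 ψ unitSq p ![ex, ex],
        iteratedFDerivWithin ℝ 2 ψ unitSq p ![ex, ey],
        iteratedFDerivWithin ℝ 2 ψ unitSq p ![ey, ey]])
    (traj : ℕ → EuclideanSpace ℝ (Fin 2)) (htrajmem : ∀ i, traj i ∈ unitSq)
    (htraj : ∀ i, traj (i + 1) = f (traj i))
    (d : ℕ)
    (happr : HasDistinctFractalApproachDirections (Set.range fun i => ψ (traj i)) P d) :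
    HasDistinctFractalApproachDirections (Set.range traj) p d := by
  classical
  have hUD : UniqueDiffWithinAt ℝ unitSq p := unitSq_uniqueDiff p hp
  set A := fderivWithin ℝ ψ unitSq p with hA_def
  have hder : HasFDerivWithinAt ψ A unitSq p :=
    ((hψ.differentiableOn (by norm_num)) p hp).hasFDerivWithinAt
  have hAex : iteratedFDerivWithin ℝ 1 ψ unitSq p ![ex] = A ex := by
    rw [iteratedFDerivWithin_one_apply hUD]
    simp
    rfl
  have hAey : iteratedFDerivWithin ℝ 1 ψ unitSq p ![ey] = A ey := by
    rw [iteratedFDerivWithin_one_apply hUD]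
    simp
    rfl
  have hAinj : ∀ v, A v = 0 → v = 0 := by
    intro v hv
    have hdec := euclid2_decomp v
    have hcomb : v 0 • A ex + v 1 • A ey = 0 := by
      rw [← map_smul, ← map_smul, ← map_add, ← hdec, hv]
    have hsum : ∑ i : Fin 5, (![v 0, v 1, 0, 0, 0] : Fin 5 → ℝ) i •
        (![iteratedFDerivWithin ℝ 1 ψ unitSq p ![ex],
        iteratedFDerivWithin ℝ 1 ψ unitSq p ![ey],
        iteratedFDerivWithin ℝ 2 ψ unitSq p ![ex, ex],
        iteratedFDerivWithin ℝ 2 ψ unitSq p ![ex, ey],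
        iteratedFDerivWithin ℝ 2 ψ unitSq p ![ey, ey]]) i = 0 := by
      simp only [Fin.sum_univ_five]
      simp [hAex, hAey]
      exact hcomb
    have h0 := Fintype.linearIndependent_iff.mp hindep ![v 0, v 1, 0, 0, 0] hsum
    have hv0 : v 0 = 0 := by simpa using h0 0
    have hv1 : v 1 = 0 := by simpa using h0 1
    rw [hdec, hv0, hv1]
    simp
  obtain ⟨c, hc, hcA⟩ := exists_bound A hAinj
  have hψc : ContinuousOn ψ unitSq := hψ.continuousOn
  have hinj' : ∀ x ∈ unitSq, ψ x = ψ p → x = p := by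
    intro x hx h
    exact hinj x hx (by rw [hP]; exact h)
  rw [hP] at happr
  obtain ⟨L, hLd, hLdist⟩ := happr
  have key : ∀ i : Fin d, ∃ l, L i = ‖A l‖⁻¹ • A l ∧
      HasFractalApproachDirection (Set.range traj) p l := fun i =>
    pull_one ψ p hp hψc hinj' A hder c hc hcA traj htrajmem (L i) (hLd i)
  choose l hl1 hl2 using key
  refine ⟨l, hl2, fun i j hij => ⟨?_, ?_⟩⟩
  · intro h
    exact (hLdist i j hij).1 (by rw [hl1 i, hl1 j, h])
  · intro h
    apply (hLdist i j hij).2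
    rw [hl1 i, hl1 j, h]
    simp
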